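/- Let E0 > 0. For γ ≥ 0 set ε(γ) = (−(E0+4) + √((E0+4)² + 4γ²))/2, E1(γ) = E0 + ε(γ), a(γ) = 4 + E0 + ε(γ), and define h_γ(τ) = (1 + a(γ)τ)²·(1 + E1(γ)τ) / (τ·(1 + (a(γ)+ε(γ))τ)) for τ > 0. Then for each γ ≥ 0 the function h_γ attains a global minimum on (0, ∞); moreover, if γ_n → 0⁺ and τ_n is any minimizer of h_{γ_n}, then τ_n → 1/√(E0(E0+4)) and min_{τ>0} h_{γ_n}(τ) → 2(2 + E0 + √(E0(E0+4))). -/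

import Mathlib

open Filter

/-- The unique positive root of `ε² + (E0+4)ε - γ² = 0` (equal to `0` at `γ = 0`). -/
noncomputable def epsPar (E0 γ : ℝ) : ℝ :=
  (-(E0 + 4) + Real.sqrt ((E0 + 4)^2 + 4 * γ^2)) / 2

/-- `E1 = E0 + ε`. -/
noncomputable def E1Par (E0 γ : ℝ) : ℝ := E0 + epsPar E0 γ

/-- `a = 4 + E0 + ε`. -/
noncomputable def aPar (E0 γ : ℝ) : ℝ := 4 + E0 + epsPar E0 γ

/-- `h_γ(τ) = (1 + aτ)²(1 + E1τ)/(τ(1 + (a+ε)τ))`. -/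
noncomputable def hfun (E0 γ τ : ℝ) : ℝ :=
  (1 + aPar E0 γ * τ)^2 * (1 + E1Par E0 γ * τ) /
    (τ * (1 + (aPar E0 γ + epsPar E0 γ) * τ))

/-- `h` written with `ε` as an independent parameter. -/
noncomputable def Hf (E0 e τ : ℝ) : ℝ :=
  (1 + (E0 + 4 + e) * τ)^2 * (1 + (E0 + e) * τ) / (τ * (1 + (E0 + 4 + 2*e) * τ))

lemma hfun_eq (E0 γ τ : ℝ) : hfun E0 γ τ = Hf E0 (epsPar E0 γ) τ := by
  unfold hfun Hf aPar E1Par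
  ring_nf

lemma eps_nonneg {E0 γ : ℝ} (hE0 : 0 < E0) : 0 ≤ epsPar E0 γ := by
  unfold epsPar
  have h1 : E0 + 4 ≤ Real.sqrt ((E0+4)^2 + 4*γ^2) := by
    have h2 := Real.sqrt_le_sqrt
      (show (E0+4)^2 ≤ (E0+4)^2 + 4*γ^2 by nlinarith [sq_nonneg γ])
    rwa [Real.sqrt_sq (by linarith)] at h2
  linarith

lemma eps_zero {E0 : ℝ} (hE0 : 0 < E0) : epsPar E0 0 = 0 := by
  unfold epsPar
  rw [show (E0+4)^2 + 4*(0:ℝ)^2 = (E0+4)^2 by ring, Real.sqrt_sq (by linarith)]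
  ring

lemma den_pos {E0 e τ : ℝ} (hE0 : 0 < E0) (he : 0 ≤ e) (ht : 0 < τ) :
    0 < τ * (1 + (E0 + 4 + 2*e) * τ) := by
  apply mul_pos ht; nlinarith

private lemma key1 (E0 e t : ℝ) (hE0 : 0 ≤ E0) (he : 0 ≤ e) (ht : 0 ≤ t) :
    (1 + (E0+4)*t) * (1 + E0*t) * (1 + (E0+4+2*e)*t)
      ≤ (1 + (E0+4+e)*t)^2 * (1 + (E0+e)*t) := by
  obtain ⟨x, rfl⟩ : ∃ x, e = x^2 := ⟨Real.sqrt e, (Real.sq_sqrt he).symm⟩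
  obtain ⟨y, rfl⟩ : ∃ y, t = y^2 := ⟨Real.sqrt t, (Real.sq_sqrt ht).symm⟩
  obtain ⟨z, rfl⟩ : ∃ z, E0 = z^2 := ⟨Real.sqrt E0, (Real.sq_sqrt hE0).symm⟩
  have hP : (0:ℝ) ≤ 1*x^2*y^2 + 8*x^2*y^4 + 2*x^2*y^4*z^2 + 16*x^2*y^6 + 8*x^2*y^6*z^2 + 1*x^2*y^6*z^4 + 3*x^4*y^4 + 8*x^4*y^6 + 3*x^4*y^6*z^2 + 1*x^6*y^6 := by positivity
  nlinarith [hP]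

private lemma key2 (E0 e t : ℝ) (hE0 : 0 ≤ E0) (he : 0 ≤ e) (ht : 0 ≤ t) :
    1 + (E0+4+2*e)*t ≤ (1 + (E0+4+e)*t)^2 * (1 + (E0+e)*t) := by
  obtain ⟨x, rfl⟩ : ∃ x, e = x^2 := ⟨Real.sqrt e, (Real.sq_sqrt he).symm⟩
  obtain ⟨y, rfl⟩ : ∃ y, t = y^2 := ⟨Real.sqrt t, (Real.sq_sqrt ht).symm⟩
  obtain ⟨z, rfl⟩ : ∃ z, E0 = z^2 := ⟨Real.sqrt E0, (Real.sq_sqrt hE0).symm⟩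
  have hP : (0:ℝ) ≤ 4*y^2 + 2*y^2*z^2 + 16*y^4 + 16*y^4*z^2 + 3*y^4*z^4 + 16*y^6*z^2 + 8*y^6*z^4 + 1*y^6*z^6 + 1*x^2*y^2 + 16*x^2*y^4 + 6*x^2*y^4*z^2 + 16*x^2*y^6 + 16*x^2*y^6*z^2 + 3*x^2*y^6*z^4 + 3*x^4*y^4 + 8*x^4*y^6 + 3*x^4*y^6*z^2 + 1*x^6*y^6 := by positivity
  nlinarith [hP]

private lemma key3 (E0 e t : ℝ) (hE0 : 0 ≤ E0) (he : 0 ≤ e) (ht : 0 ≤ t) :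
    E0*t^2*(1 + (E0+4+2*e)*t) ≤ (1 + (E0+4+e)*t)^2 * (1 + (E0+e)*t) := by
  obtain ⟨x, rfl⟩ : ∃ x, e = x^2 := ⟨Real.sqrt e, (Real.sq_sqrt he).symm⟩
  obtain ⟨y, rfl⟩ : ∃ y, t = y^2 := ⟨Real.sqrt t, (Real.sq_sqrt ht).symm⟩
  obtain ⟨z, rfl⟩ : ∃ z, E0 = z^2 := ⟨Real.sqrt E0, (Real.sq_sqrt hE0).symm⟩
  have hP : (0:ℝ) ≤ 1 + 8*y^2 + 3*y^2*z^2 + 16*y^4 + 15*y^4*z^2 + 3*y^4*z^4 + 12*y^6*z^2 + 7*y^6*z^4 + 1*y^6*z^6 + 3*x^2*y^2 + 16*x^2*y^4 + 6*x^2*y^4*z^2 + 16*x^2*y^6 + 14*x^2*y^6*z^2 + 3*x^2*y^6*z^4 + 3*x^4*y^4 + 8*x^4*y^6 + 3*x^4*y^6*z^2 + 1*x^6*y^6 := by positivity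
  nlinarith [hP]

lemma Hf_lb1 {E0 e τ : ℝ} (hE0 : 0 < E0) (he : 0 ≤ e) (ht : 0 < τ) :
    1/τ ≤ Hf E0 e τ := by
  unfold Hf
  rw [div_le_div_iff₀ ht (den_pos hE0 he ht)]
  have h := mul_le_mul_of_nonneg_left (key2 E0 e τ hE0.le he ht.le) ht.le
  nlinarith [h]

lemma Hf_lb2 {E0 e τ : ℝ} (hE0 : 0 < E0) (he : 0 ≤ e) (ht : 0 < τ) :
    E0 * τ ≤ Hf E0 e τ := by
  unfold Hf
  rw [le_div_iff₀ (den_pos hE0 he ht)]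
  have h := key3 E0 e τ hE0.le he ht.le
  nlinarith [h]

lemma h0_le_Hf {E0 e τ : ℝ} (hE0 : 0 < E0) (he : 0 ≤ e) (ht : 0 < τ) :
    (1 + (E0+4)*τ) * (1 + E0*τ) / τ ≤ Hf E0 e τ := by
  unfold Hf
  rw [div_le_div_iff₀ ht (den_pos hE0 he ht)]
  have h := mul_le_mul_of_nonneg_left (key1 E0 e τ hE0.le he ht.le) ht.le
  nlinarith [h]

lemma Mstar_le_h0 {E0 τ : ℝ} (hE0 : 0 < E0) (ht : 0 < τ) :
    2*(2 + E0 + Real.sqrt (E0*(E0+4))) ≤ (1 + (E0+4)*τ) * (1 + E0*τ) / τ := by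
  set s := Real.sqrt (E0*(E0+4)) with hs
  have hs2 : s^2 = E0*(E0+4) := Real.sq_sqrt (by positivity)
  rw [le_div_iff₀ ht]
  have hs2t : s^2*τ^2 = E0*(E0+4)*τ^2 := by rw [hs2]
  nlinarith [sq_nonneg (1 - s*τ), hs2t]

lemma Mstar_le_Hf {E0 e τ : ℝ} (hE0 : 0 < E0) (he : 0 ≤ e) (ht : 0 < τ) :
    2*(2 + E0 + Real.sqrt (E0*(E0+4))) ≤ Hf E0 e τ :=
  le_trans (Mstar_le_h0 hE0 ht) (h0_le_Hf hE0 he ht)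

lemma sq_pen {E0 e τ : ℝ} (hE0 : 0 < E0) (he : 0 ≤ e) (ht : 0 < τ) :
    (1 - Real.sqrt (E0*(E0+4)) * τ)^2
      ≤ τ * (Hf E0 e τ - 2*(2 + E0 + Real.sqrt (E0*(E0+4)))) := by
  set s := Real.sqrt (E0*(E0+4)) with hs
  have hs2 : s^2 = E0*(E0+4) := Real.sq_sqrt (by positivity)
  have h1 := h0_le_Hf hE0 he ht
  have h2 : τ * ((1 + (E0+4)*τ) * (1 + E0*τ) / τ) = (1 + (E0+4)*τ) * (1 + E0*τ) := by
    field_simp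
  have h3 := mul_le_mul_of_nonneg_left h1 ht.le
  have hs2t : s^2*τ^2 = E0*(E0+4)*τ^2 := by rw [hs2]
  nlinarith [h3, h2, hs2t]

lemma Hf_zero {E0 τ : ℝ} (hE0 : 0 < E0) (ht : 0 < τ) :
    Hf E0 0 τ = (1 + (E0+4)*τ) * (1 + E0*τ) / τ := by
  unfold Hf
  rw [div_eq_div_iff (den_pos hE0 le_rfl ht).ne' ht.ne']
  ring

lemma Hf_zero_at_min {E0 : ℝ} (hE0 : 0 < E0) :
    Hf E0 0 (1 / Real.sqrt (E0*(E0+4))) = 2*(2 + E0 + Real.sqrt (E0*(E0+4))) := by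
  set s := Real.sqrt (E0*(E0+4)) with hs
  have hspos : 0 < s := Real.sqrt_pos.mpr (by positivity)
  have hs2 : s^2 = E0*(E0+4) := Real.sq_sqrt (by positivity)
  rw [Hf_zero hE0 (by positivity)]
  field_simp
  ring_nf
  nlinarith [hs2, hspos]

/-- Existence of a global minimizer of `h_γ` on `(0,∞)`. -/
lemma exists_min {E0 : ℝ} (hE0 : 0 < E0) (γ : ℝ) :
    ∃ τ > (0:ℝ), ∀ τ' > (0:ℝ), hfun E0 γ τ ≤ hfun E0 γ τ' := by
  set e := epsPar E0 γ with he_def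
  have he : 0 ≤ e := eps_nonneg hE0
  set M := Hf E0 e 1 with hM_def
  have hM1 : 1 ≤ M := by simpa using Hf_lb1 (τ := 1) hE0 he one_pos
  have hME : E0 ≤ M := by simpa using Hf_lb2 (τ := 1) hE0 he one_pos
  have hMpos : 0 < M := lt_of_lt_of_le one_pos hM1
  set K := Set.Icc (1/M) (M/E0) with hK_def
  have h1K : (1:ℝ) ∈ K := by
    constructor
    · rw [div_le_one hMpos]; exact hM1
    · rw [le_div_iff₀ hE0]; linarith
  have hKpos : ∀ x ∈ K, (0:ℝ) < x := fun x hx => lt_of_lt_of_le (by positivity) hx.1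
  have hcont : ContinuousOn (fun τ => Hf E0 e τ) K := by
    unfold Hf
    apply ContinuousOn.div (by fun_prop) (by fun_prop)
    intro x hx
    exact (den_pos hE0 he (hKpos x hx)).ne'
  obtain ⟨τ0, hτ0K, hmin⟩ := isCompact_Icc.exists_isMinOn ⟨1, h1K⟩ hcont
  have hτ0pos : 0 < τ0 := hKpos τ0 hτ0K
  refine ⟨τ0, hτ0pos, ?_⟩
  intro τ' hτ'
  rw [hfun_eq, hfun_eq, ← he_def]
  by_cases hK : τ' ∈ K
  · exact isMinOn_iff.mp hmin τ' hK
  · have hτ0le : Hf E0 e τ0 ≤ M := isMinOn_iff.mp hmin 1 h1K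
    rw [hK_def, Set.mem_Icc, not_and_or] at hK
    rcases hK with h' | h'
    · push_neg at h'
      have hlt : M < 1/τ' := by
        rw [lt_div_iff₀ hτ']
        rw [lt_div_iff₀ hMpos] at h'
        linarith [mul_comm M τ', mul_comm τ' M]
      have := Hf_lb1 hE0 he hτ'
      linarith
    · push_neg at h'
      have hlt : M < E0 * τ' := by
        rw [div_lt_iff₀ hE0] at h'
        linarith [mul_comm τ' E0]
      have := Hf_lb2 hE0 he hτ'
      linarith

/-- each `h_γ` attains a global minimum on `(0, ∞)`; as `γ → 0⁺`,
any minimizers converge to `1/√(E0(E0+4))` and the minimum values converge to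
`2(2 + E0 + √(E0(E0+4)))`. -/
theorem hfun_min_asymptotics (E0 : ℝ) (hE0 : 0 < E0) :
    (∀ γ : ℝ, 0 ≤ γ → ∃ τ > (0 : ℝ), ∀ τ' > (0 : ℝ), hfun E0 γ τ ≤ hfun E0 γ τ') ∧
    (∀ γ τm : ℕ → ℝ, (∀ n, 0 < γ n) → Tendsto γ atTop (nhds 0) →
      (∀ n, 0 < τm n) →
      (∀ n, ∀ τ > (0 : ℝ), hfun E0 (γ n) (τm n) ≤ hfun E0 (γ n) τ) →
      Tendsto τm atTop (nhds (1 / Real.sqrt (E0 * (E0 + 4)))) ∧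
      Tendsto (fun n => hfun E0 (γ n) (τm n)) atTop
        (nhds (2 * (2 + E0 + Real.sqrt (E0 * (E0 + 4)))))) := by
  constructor
  · intro γ _
    exact exists_min hE0 γ
  · intro γ τm hγpos hγ0 hτm hminim
    set s := Real.sqrt (E0 * (E0 + 4)) with hs_def
    have hspos : 0 < s := Real.sqrt_pos.mpr (by positivity)
    set Ms := 2 * (2 + E0 + s) with hMs_def
    set e : ℕ → ℝ := fun n => epsPar E0 (γ n) with he_def
    have he : ∀ n, 0 ≤ e n := fun n => eps_nonneg hE0
    set m : ℕ → ℝ := fun n => hfun E0 (γ n) (τm n) with hm_def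
    have hm_eq : ∀ n, m n = Hf E0 (e n) (τm n) := fun n => hfun_eq _ _ _
    set τstar : ℝ := 1 / s with hτstar_def
    have hτstar : 0 < τstar := by positivity
    have hupper : ∀ n, m n ≤ Hf E0 (e n) τstar := by
      intro n
      rw [hm_def]
      simp only
      rw [show Hf E0 (e n) τstar = hfun E0 (γ n) τstar from (hfun_eq _ _ _).symm]
      exact hminim n τstar hτstar
    have hlow : ∀ n, Ms ≤ m n := fun n => (hm_eq n) ▸ Mstar_le_Hf hE0 (he n) (hτm n)
    have heps : Tendsto e atTop (nhds 0) := by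
      have hc : Continuous (epsPar E0) := by unfold epsPar; fun_prop
      have h := (hc.tendsto 0).comp hγ0
      rw [eps_zero hE0] at h
      exact h
    have hcontHf : ContinuousAt (fun x => Hf E0 x τstar) 0 := by
      unfold Hf
      apply ContinuousAt.div (by fun_prop) (by fun_prop)
      exact (den_pos hE0 le_rfl hτstar).ne'
    have hu : Tendsto (fun n => Hf E0 (e n) τstar) atTop (nhds Ms) := by
      have h := hcontHf.tendsto.comp heps
      simp only [Function.comp_def] at h
      rwa [show Hf E0 0 τstar = Ms from by
        rw [hτstar_def, hMs_def, hs_def]; exact Hf_zero_at_min hE0] at h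
    have hmT : Tendsto m atTop (nhds Ms) :=
      tendsto_of_tendsto_of_tendsto_of_le_of_le tendsto_const_nhds hu hlow hupper
    have hq : ∀ n, (1 - s * τm n)^2 ≤ τm n * (m n - Ms) := by
      intro n
      rw [hm_eq n]
      exact sq_pen hE0 (he n) (hτm n)
    have hev1 : ∀ᶠ n in atTop, m n < Ms + s :=
      hmT.eventually_lt_const (by linarith)
    have hbd : ∀ᶠ n in atTop, τm n ≤ 4/s := by
      refine hev1.mono fun n hn => ?_
      have h1 := hq n
      have h2 : (1 - s * τm n)^2 ≤ s * τm n := by nlinarith [hτm n]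
      rw [le_div_iff₀ hspos]
      nlinarith [h2, mul_pos hspos (hτm n)]
    have hq0 : Tendsto (fun n => (1 - s * τm n)^2) atTop (nhds 0) := by
      apply squeeze_zero' (Eventually.of_forall fun n => sq_nonneg _)
        (hbd.mono fun n hn => ?_)
      · have h := hmT.sub_const Ms
        rw [sub_self] at h
        simpa using h.const_mul (4/s)
      · calc (1 - s * τm n)^2 ≤ τm n * (m n - Ms) := hq n
          _ ≤ (4/s) * (m n - Ms) := by nlinarith [hlow n, hτm n]
    have habs : Tendsto (fun n => |1 - s * τm n|) atTop (nhds 0) := by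
      have h := (Real.continuous_sqrt.tendsto 0).comp hq0
      rw [Real.sqrt_zero] at h
      have heq : (Real.sqrt ∘ fun n => (1 - s * τm n)^2) = fun n => |1 - s * τm n| := by
        funext n; simp [Function.comp, Real.sqrt_sq_eq_abs]
      rwa [heq] at h
    have hzero : Tendsto (fun n => 1 - s * τm n) atTop (nhds 0) := by
      have hneg : Tendsto (fun n => -|1 - s * τm n|) atTop (nhds 0) := by
        simpa using habs.neg
      exact tendsto_of_tendsto_of_tendsto_of_le_of_le hneg habs
        (fun n => neg_abs_le _) (fun n => le_abs_self _)
    have hst : Tendsto (fun n => s * τm n) atTop (nhds 1) := by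
      have h : Tendsto (fun n : ℕ => 1 - (1 - s * τm n)) atTop (nhds (1 - 0)) :=
        tendsto_const_nhds.sub hzero
      simpa using h
    have hτmT : Tendsto τm atTop (nhds (1/s)) := by
      have h := hst.div_const s
      have heq : (fun n => s * τm n / s) = τm := by
        funext n; rw [mul_comm, mul_div_assoc, div_self hspos.ne', mul_one]
      rwa [heq] at h
    exact ⟨hτmT, hmT⟩
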